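/- For every positive integer t, t·δ(t) ≤ scc(K_t(2)), where δ(t) = min{ k − 1 : k a positive integer with t ≤ C(k, ⌈k/2⌉) } and C(·,·) denotes the binomial coefficient. -/

import Mathlib

open Finset

/-- A clique covering of `G`: a finite family of cliques covering every edge. -/
def IsCliqueCover {V : Type*} (G : SimpleGraph V) (𝒞 : Finset (Finset V)) : Prop :=
  (∀ C ∈ 𝒞, G.IsClique (C : Set V)) ∧
  ∀ u v, G.Adj u v → ∃ C ∈ 𝒞, u ∈ C ∧ v ∈ C

/-- A clique partition of `G`: every edge lies in exactly one clique of the family. -/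
def IsCliquePartition {V : Type*} (G : SimpleGraph V) (𝒞 : Finset (Finset V)) : Prop :=
  (∀ C ∈ 𝒞, G.IsClique (C : Set V)) ∧
  ∀ u v, G.Adj u v → ∃! C, C ∈ 𝒞 ∧ u ∈ C ∧ v ∈ C

/-- The sigma clique cover number: minimum total size of cliques in a clique covering. -/
noncomputable def scc {V : Type*} (G : SimpleGraph V) : ℕ :=
  sInf {k | ∃ 𝒞, IsCliqueCover G 𝒞 ∧ ∑ C ∈ 𝒞, C.card = k}

/-- The sigma clique partition number: minimum total size of cliques in a clique partition. -/
noncomputable def scp {V : Type*} (G : SimpleGraph V) : ℕ :=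
  sInf {k | ∃ 𝒞, IsCliquePartition G 𝒞 ∧ ∑ C ∈ 𝒞, C.card = k}

/-- The clique cover number: minimum number of cliques in a clique covering. -/
noncomputable def cc {V : Type*} (G : SimpleGraph V) : ℕ :=
  sInf {k | ∃ 𝒞, IsCliqueCover G 𝒞 ∧ 𝒞.card = k}

/-- The clique partition number: minimum number of cliques in a clique partition. -/
noncomputable def cp {V : Type*} (G : SimpleGraph V) : ℕ :=
  sInf {k | ∃ 𝒞, IsCliquePartition G 𝒞 ∧ 𝒞.card = k}

/-- `scc'`: the minimum total size of cliques over clique coverings achieving `cc G`. -/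
noncomputable def scc' {V : Type*} (G : SimpleGraph V) : ℕ :=
  sInf {k | ∃ 𝒞, IsCliqueCover G 𝒞 ∧ 𝒞.card = cc G ∧ ∑ C ∈ 𝒞, C.card = k}

/-- The Cocktail party graph `K_t(2)`: the complete graph on `2t` vertices minus a perfect
matching. Vertices are pairs `(i, a)`; two vertices are adjacent iff their first
coordinates differ. -/
def cocktailParty (t : ℕ) : SimpleGraph (Fin t × Fin 2) where
  Adj u v := u.1 ≠ v.1
  symm := ⟨fun _ _ h => h.symm⟩
  loopless := ⟨fun _ h => h rfl⟩

/-- `δ(t) = min { k − 1 : k ≥ 1, t ≤ C(k, ⌈k/2⌉) }`. -/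
noncomputable def delta (t : ℕ) : ℕ :=
  sInf {m | ∃ k : ℕ, 1 ≤ k ∧ m = k - 1 ∧ t ≤ Nat.choose k ((k + 1) / 2)}


/-- central-ish binomial: `C(d, ⌈d/2⌉)` -/
def ccen (d : ℕ) : ℕ := d.choose ((d+1)/2)

lemma ccen_pos (d : ℕ) : 0 < ccen d := Nat.choose_pos (by omega)

lemma ccen_eq (d : ℕ) : ccen d = d.choose (d/2) := by
  unfold ccen
  rcases Nat.even_or_odd d with ⟨k, hk⟩ | ⟨k, hk⟩
  · subst hk; congr 1; omega
  · subst hk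
    have h1 : (2*k+1+1)/2 = k+1 := by omega
    have h2 : (2*k+1)/2 = k := by omega
    rw [h1, h2]
    have := Nat.choose_symm (n := 2*k+1) (k := k) (by omega)
    simpa [show 2*k+1-k = k+1 by omega] using this

lemma choose_le_ccen (d r : ℕ) : d.choose r ≤ ccen d := by
  rw [ccen_eq]; exact Nat.choose_le_middle r d

lemma ccen_double (k : ℕ) : ccen (2*k) = (2*k).choose k := by
  unfold ccen; congr 1; omega

lemma ccen_odd (k : ℕ) : ccen (2*k+1) = (2*k+1).choose (k+1) := by
  unfold ccen; congr 1; omega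

lemma ccen_succ_odd (k : ℕ) : ccen (2*k+2) = 2 * ccen (2*k+1) := by
  have h1 : ccen (2*k+2) = (2*k+1+1).choose (k+1) := by unfold ccen; congr 1; omega
  have h2 := Nat.choose_succ_succ' (2*k+1) k
  have hs : (2*k+1).choose (k+1) = (2*k+1).choose k := by
    have := Nat.choose_symm (n := 2*k+1) (k := k+1) (by omega)
    simpa [show 2*k+1-(k+1) = k by omega] using this.symm
  rw [h1, h2, ccen_odd, hs]; omega

lemma ccen_mono (d : ℕ) : ccen d ≤ ccen (d+1) := by
  rcases Nat.even_or_odd d with ⟨k, hk⟩ | ⟨k, hk⟩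
  · have hd : d = 2*k := by omega
    subst hd
    rw [ccen_double, show (2*k+1) = 2*k+1 from rfl, ccen_odd]
    have h2 := Nat.choose_succ_succ' (2*k) k
    omega
  · have hd : d = 2*k+1 := by omega
    subst hd
    rw [show 2*k+1+1 = 2*k+2 by ring, ccen_succ_odd]
    omega

lemma ccen_rel (k : ℕ) : (k+1) * ccen (2*k+1) = (2*k+1) * ccen (2*k) := by
  rw [ccen_odd, ccen_double]
  have h := Nat.add_one_mul_choose_eq (2*k) k
  rw [mul_comm ((k+1)) _ ]
  rw [h.symm, mul_comm]

/-- convexity of `1/ccen` for `d ≥ 1` -/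
lemma ccen_convex (d : ℕ) (hd : 1 ≤ d) :
    2 / (ccen (d+1) : ℚ) ≤ 1 / (ccen d : ℚ) + 1 / (ccen (d+2) : ℚ) := by
  rcases Nat.even_or_odd d with ⟨k, hk⟩ | ⟨k, hk⟩
  · -- d = 2k, k ≥ 1
    have hdk : d = 2*k := by omega
    subst hdk
    have hk1 : 1 ≤ k := by omega
    have hup : 0 < ccen (2*k) := ccen_pos _
    have hvp : 0 < ccen (2*k+1) := ccen_pos _
    have hrel : (k+1) * ccen (2*k+1) = (2*k+1) * ccen (2*k) := ccen_rel k
    have hw : ccen (2*k+2) = 2*ccen (2*k+1) := ccen_succ_odd k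
    set u := ccen (2*k) with hu
    set v := ccen (2*k+1) with hv
    have h3u : 3 * u ≤ 2 * v := by
      have h : (k+1) * (3*u) ≤ (k+1) * (2*v) := by nlinarith
      exact Nat.le_of_mul_le_mul_left h (by omega)
    rw [show 2*k+1 = 2*k+1 from rfl, show 2*k+2 = 2*k+2 from rfl] at *
    rw [show (2*k+1+1) = 2*k+2 by ring, hw]
    have huq : (0:ℚ) < u := by exact_mod_cast hup
    have hvq : (0:ℚ) < v := by exact_mod_cast hvp
    have h3uq : (3:ℚ) * u ≤ 2 * v := by exact_mod_cast h3u
    rw [div_add_div _ _ (ne_of_gt huq) (by positivity), div_le_div_iff₀ (by positivity) (by positivity)]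
    push_cast
    nlinarith
  · -- d = 2k+1 : ccen(d+1) = 2 ccen(d)
    have hdk : d = 2*k+1 := by omega
    subst hdk
    have hw : ccen (2*k+1+1) = 2 * ccen (2*k+1) := by
      rw [show 2*k+1+1 = 2*k+2 by ring]; exact ccen_succ_odd k
    rw [hw]
    have hvq : (0:ℚ) < ccen (2*k+1) := by exact_mod_cast ccen_pos (2*k+1)
    have h2 : (0:ℚ) < ccen (2*k+1+2) := by exact_mod_cast ccen_pos _
    have heq : 2 / ((2 * ccen (2*k+1) : ℕ) : ℚ) = 1 / (ccen (2*k+1) : ℚ) := by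
      push_cast; field_simp
    rw [heq]
    have : (0:ℚ) ≤ 1 / (ccen (2*k+1+2) : ℚ) := by positivity
    linarith

noncomputable def gg (d : ℕ) : ℚ := 1 / (ccen d : ℚ)

/-- slope monotonicity -/
lemma gg_step_mono {d e : ℕ} (hd : 1 ≤ d) (hde : d ≤ e) :
    gg (d+1) - gg d ≤ gg (e+1) - gg e := by
  induction e, hde using Nat.le_induction with
  | base => exact le_refl _
  | succ e hde ih =>
      have : gg (e+1) - gg e ≤ gg (e+2) - gg (e+1) := by
        unfold gg
        have h := ccen_convex e (le_trans hd hde)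
        have h2 : (2:ℚ) / (ccen (e+1) : ℚ) = 1 / (ccen (e+1):ℚ) + 1 / (ccen (e+1):ℚ) := by ring
        linarith
      calc gg (d+1) - gg d ≤ gg (e+1) - gg e := ih
        _ ≤ gg (e+1+1) - gg (e+1) := this

lemma gg_tangent_down {m : ℕ} (hm : 1 ≤ m) :
    ∀ k d, 1 ≤ d → d + k = m → gg m + (gg (m+1) - gg m) * ((d:ℚ) - (m:ℚ)) ≤ gg d := by
  intro k
  induction k with
  | zero => intro d _ hk; simp at hk; subst hk; simp
  | succ k ih =>
      intro d hd hk
      have ihd := ih (d+1) (by omega) (by omega)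
      have hstep : gg (d+1) - gg d ≤ gg (m+1) - gg m := gg_step_mono hd (by omega)
      push_cast at ihd ⊢
      nlinarith

/-- discrete tangent line bound at `m` -/
lemma gg_tangent {m d : ℕ} (hm : 1 ≤ m) (hd : 1 ≤ d) :
    gg m + (gg (m+1) - gg m) * ((d:ℚ) - (m:ℚ)) ≤ gg d := by
  rcases le_total m d with h | h
  · induction d, h using Nat.le_induction with
    | base => simp
    | succ d hmd ih =>
        have hstep : gg (m+1) - gg m ≤ gg (d+1) - gg d := gg_step_mono hm hmd
        have ihd := ih (le_trans hm hmd)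
        push_cast
        push_cast at ihd
        nlinarith
  · exact gg_tangent_down hm (m - d) d hd (by omega)


open Finset

section SortSec
variable {n : ℕ}

noncomputable def splitEquiv (IA IB : Finset (Fin n)) (hd : Disjoint IA IB) :
    ({x // x ∈ IA} ⊕ {x // x ∈ IB}) ≃ {x // x ∈ IA ∪ IB} :=
  Equiv.ofBijective
    (Sum.elim (fun x => ⟨x.1, Finset.mem_union_left _ x.2⟩)
              (fun y => ⟨y.1, Finset.mem_union_right _ y.2⟩))
    (by
      constructor
      · rintro (⟨x, hx⟩ | ⟨x, hx⟩) (⟨y, hy⟩ | ⟨y, hy⟩) h <;>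
          simp only [Sum.elim_inl, Sum.elim_inr, Subtype.mk.injEq] at h
        · subst h; rfl
        · exact absurd hy (Finset.disjoint_left.1 hd (h ▸ hx))
        · exact absurd hx (Finset.disjoint_left.1 hd (h ▸ hy))
        · subst h; rfl
      · rintro ⟨x, hx⟩
        rcases Finset.mem_union.1 hx with h | h
        · exact ⟨Sum.inl ⟨x, h⟩, rfl⟩
        · exact ⟨Sum.inr ⟨x, h⟩, rfl⟩)

noncomputable def sortPerm (IA IB : Finset (Fin n)) (hd : Disjoint IA IB) :
    Equiv.Perm (Fin n) :=
  Equiv.Perm.ofSubtype (p := (· ∈ IA ∪ IB))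
    ((((splitEquiv IA IB hd).symm).trans
      ((Equiv.sumCongr (IA.orderIsoOfFin rfl).toEquiv.symm (IB.orderIsoOfFin rfl).toEquiv.symm).trans
        ((finSumFinEquiv.trans (finCongr (Finset.card_union_of_disjoint hd).symm)).trans
          ((IA ∪ IB).orderIsoOfFin rfl).toEquiv))))

lemma sortPerm_not_mem {IA IB : Finset (Fin n)} (hd : Disjoint IA IB) {x : Fin n}
    (hx : x ∉ IA ∪ IB) : sortPerm IA IB hd x = x :=
  Equiv.Perm.ofSubtype_apply_of_not_mem _ hx

lemma sortPerm_mem {IA IB : Finset (Fin n)} (hd : Disjoint IA IB) {x : Fin n}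
    (hx : x ∈ IA ∪ IB) : sortPerm IA IB hd x ∈ IA ∪ IB := by
  unfold sortPerm
  rw [Equiv.Perm.ofSubtype_apply_of_mem _ hx]
  exact Subtype.coe_prop _

lemma splitEquiv_symm_left {IA IB : Finset (Fin n)} (hd : Disjoint IA IB) {x : Fin n}
    (hx : x ∈ IA) (hxu : x ∈ IA ∪ IB) :
    (splitEquiv IA IB hd).symm ⟨x, hxu⟩ = Sum.inl ⟨x, hx⟩ := by
  rw [Equiv.symm_apply_eq]; rfl

lemma splitEquiv_symm_right {IA IB : Finset (Fin n)} (hd : Disjoint IA IB) {x : Fin n}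
    (hx : x ∈ IB) (hxu : x ∈ IA ∪ IB) :
    (splitEquiv IA IB hd).symm ⟨x, hxu⟩ = Sum.inr ⟨x, hx⟩ := by
  rw [Equiv.symm_apply_eq]; rfl

lemma sortPerm_lt {IA IB : Finset (Fin n)} (hd : Disjoint IA IB) {x y : Fin n}
    (hx : x ∈ IA) (hy : y ∈ IB) :
    sortPerm IA IB hd x < sortPerm IA IB hd y := by
  have hxu : x ∈ IA ∪ IB := Finset.mem_union_left _ hx
  have hyu : y ∈ IA ∪ IB := Finset.mem_union_right _ hy
  unfold sortPerm
  rw [Equiv.Perm.ofSubtype_apply_of_mem _ hxu, Equiv.Perm.ofSubtype_apply_of_mem _ hyu]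
  simp only [Equiv.trans_apply, splitEquiv_symm_left hd hx, splitEquiv_symm_right hd hy,
    Equiv.sumCongr_apply, Sum.map_inl, Sum.map_inr]
  simp only [RelIso.coe_fn_toEquiv]
  rw [Subtype.coe_lt_coe, OrderIso.lt_iff_lt, Fin.lt_def]
  simp [finSumFinEquiv_apply_left, finSumFinEquiv_apply_right]
  omega

end SortSec

section Count
variable {β : Type*} [Fintype β] [DecidableEq β]

lemma orderIsoOfFin_congr {n k : ℕ} (S T : Finset (Fin n)) (hS : S.card = k) (hT : T.card = k)
    (hst : S = T) (j : Fin k) :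
    ((S.orderIsoOfFin hS j : Fin n)) = (T.orderIsoOfFin hT j : Fin n) := by
  subst hst; rfl

lemma sortPerm_congr {n : ℕ} (IA IB IA' IB' : Finset (Fin n)) (hd : Disjoint IA IB)
    (hd' : Disjoint IA' IB') (h1 : IA = IA') (h2 : IB = IB') :
    sortPerm IA IB hd = sortPerm IA' IB' hd' := by
  subst h1; subst h2; rfl

theorem count_before (A B : Finset β) (hd : Disjoint A B) :
    (Fintype.card β).factorial ≤
      (A.card + B.card).choose A.card *
        (Finset.univ.filter (fun σ : β ≃ Fin (Fintype.card β) =>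
            ∀ x ∈ A, ∀ y ∈ B, σ x < σ y)).card := by
  classical
  set N := Fintype.card β with hN
  set a := A.card with ha
  set b := B.card with hb
  set E := (Finset.univ.filter (fun σ : β ≃ Fin N =>
            ∀ x ∈ A, ∀ y ∈ B, σ x < σ y)) with hE
  -- data associated to σ
  have himg_card : ∀ (σ : β ≃ Fin N) (S : Finset β), (S.image σ).card = S.card :=
    fun σ S => Finset.card_image_of_injective _ σ.injective
  have hdisj : ∀ (σ : β ≃ Fin N), Disjoint (A.image σ) (B.image σ) :=
    fun σ => (Finset.disjoint_image σ.injective).2 hd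
  have hUcard : ∀ (σ : β ≃ Fin N), (A.image σ ∪ B.image σ).card = a + b := by
    intro σ
    rw [Finset.card_union_of_disjoint (hdisj σ), himg_card, himg_card]
  -- the map
  set F : (β ≃ Fin N) → Finset (Fin (a+b)) × (β ≃ Fin N) := fun σ =>
    (Finset.univ.filter (fun j : Fin (a+b) =>
        (((A.image σ ∪ B.image σ).orderIsoOfFin (hUcard σ) j : Fin N)) ∈ A.image σ),
     σ.trans (sortPerm (A.image σ) (B.image σ) (hdisj σ)))
    with hF
  -- image of s recovers IA
  have hrecover : ∀ (σ : β ≃ Fin N),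
      (F σ).1.image (fun j => ((A.image σ ∪ B.image σ).orderIsoOfFin (hUcard σ) j : Fin N))
        = A.image σ := by
    intro σ
    apply Finset.Subset.antisymm
    · intro x hx
      rcases Finset.mem_image.1 hx with ⟨j, hj, rfl⟩
      exact (Finset.mem_filter.1 hj).2
    · intro x hx
      have hxu : x ∈ A.image σ ∪ B.image σ := Finset.mem_union_left _ hx
      refine Finset.mem_image.2 ⟨((A.image σ ∪ B.image σ).orderIsoOfFin (hUcard σ)).symm ⟨x, hxu⟩,
        ?_, ?_⟩
      · apply Finset.mem_filter.2
        refine ⟨Finset.mem_univ _, ?_⟩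
        rw [OrderIso.apply_symm_apply]
        exact hx
      · rw [OrderIso.apply_symm_apply]
  -- s has card a
  have hscard : ∀ (σ : β ≃ Fin N), (F σ).1.card = a := by
    intro σ
    have hinj : Function.Injective
        (fun j : Fin (a+b) => ((A.image σ ∪ B.image σ).orderIsoOfFin (hUcard σ) j : Fin N)) := by
      intro i j h
      exact ((A.image σ ∪ B.image σ).orderIsoOfFin (hUcard σ)).injective (Subtype.ext h)
    have := hrecover σ
    have h2 : ((F σ).1.image (fun j =>
        ((A.image σ ∪ B.image σ).orderIsoOfFin (hUcard σ) j : Fin N))).card = (F σ).1.card :=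
      Finset.card_image_of_injective _ hinj
    rw [this] at h2
    rw [← h2, himg_card]
  -- τ is in E
  have hτE : ∀ (σ : β ≃ Fin N), (F σ).2 ∈ E := by
    intro σ
    apply Finset.mem_filter.2
    refine ⟨Finset.mem_univ _, fun x hx y hy => ?_⟩
    exact sortPerm_lt (hdisj σ) (Finset.mem_image_of_mem σ hx) (Finset.mem_image_of_mem σ hy)
  -- the union is recoverable from τ
  have hIUτ : ∀ (σ : β ≃ Fin N),
      A.image (F σ).2 ∪ B.image (F σ).2 = A.image σ ∪ B.image σ := by
    intro σ
    have h1 : A.image (F σ).2 = (A.image σ).image (sortPerm (A.image σ) (B.image σ) (hdisj σ)) := by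
      rw [Finset.image_image]; rfl
    have h2 : B.image (F σ).2 = (B.image σ).image (sortPerm (A.image σ) (B.image σ) (hdisj σ)) := by
      rw [Finset.image_image]; rfl
    apply Finset.eq_of_subset_of_card_le
    · rw [h1, h2]
      apply Finset.union_subset
      · intro x hx
        rcases Finset.mem_image.1 hx with ⟨z, hz, rfl⟩
        exact sortPerm_mem (hdisj σ) (Finset.mem_union_left _ hz)
      · intro x hx
        rcases Finset.mem_image.1 hx with ⟨z, hz, rfl⟩
        exact sortPerm_mem (hdisj σ) (Finset.mem_union_right _ hz)
    · rw [hUcard σ, hUcard (F σ).2]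
  -- injectivity
  have hFinj : Function.Injective F := by
    intro σ₁ σ₂ heq
    have hs : (F σ₁).1 = (F σ₂).1 := by rw [heq]
    have hτ : (F σ₁).2 = (F σ₂).2 := by rw [heq]
    have hIU : A.image σ₁ ∪ B.image σ₁ = A.image σ₂ ∪ B.image σ₂ := by
      rw [← hIUτ σ₁, ← hIUτ σ₂, hτ]
    have hoU : ∀ j : Fin (a+b),
        ((A.image σ₁ ∪ B.image σ₁).orderIsoOfFin (hUcard σ₁) j : Fin N)
          = ((A.image σ₂ ∪ B.image σ₂).orderIsoOfFin (hUcard σ₂) j : Fin N) :=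
      fun j => orderIsoOfFin_congr _ _ _ _ hIU j
    have hIA : A.image σ₁ = A.image σ₂ := by
      rw [← hrecover σ₁, ← hrecover σ₂, hs]
      apply Finset.image_congr
      intro j _
      exact hoU j
    have hIB : B.image σ₁ = B.image σ₂ := by
      have e1 : B.image σ₁ = (A.image σ₁ ∪ B.image σ₁) \ A.image σ₁ :=
        (Finset.union_sdiff_cancel_left (hdisj σ₁)).symm
      have e2 : B.image σ₂ = (A.image σ₂ ∪ B.image σ₂) \ A.image σ₂ :=
        (Finset.union_sdiff_cancel_left (hdisj σ₂)).symm
      rw [e1, e2, hIU, hIA]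
    have hπ : sortPerm (A.image σ₁) (B.image σ₁) (hdisj σ₁)
        = sortPerm (A.image σ₂) (B.image σ₂) (hdisj σ₂) :=
      sortPerm_congr _ _ _ _ _ _ hIA hIB
    apply Equiv.ext
    intro x
    have h1 : (F σ₁).2 x = sortPerm (A.image σ₁) (B.image σ₁) (hdisj σ₁) (σ₁ x) := rfl
    have h2 : (F σ₂).2 x = sortPerm (A.image σ₂) (B.image σ₂) (hdisj σ₂) (σ₂ x) := rfl
    have := congrFun (congrArg (fun (e : β ≃ Fin N) => (e : β → Fin N)) hτ) x
    rw [h1, h2, hπ] at this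
    exact (sortPerm (A.image σ₂) (B.image σ₂) (hdisj σ₂)).injective this
  -- conclude by cardinalities
  have hmapsto : ∀ σ : β ≃ Fin N, F σ ∈ (((Finset.univ : Finset (Fin (a+b))).powersetCard a) ×ˢ E) := by
    intro σ
    rw [Finset.mem_product]
    exact ⟨Finset.mem_powersetCard_univ.2 (hscard σ), hτE σ⟩
  have hcard : (Finset.univ : Finset (β ≃ Fin N)).card
      ≤ ((((Finset.univ : Finset (Fin (a+b))).powersetCard a) ×ˢ E)).card := by
    apply Finset.card_le_card_of_injOn F (fun σ _ => hmapsto σ)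
    intro x _ y _ h
    exact hFinj h
  rw [Finset.card_univ, Fintype.card_equiv (Fintype.equivFin β), Finset.card_product,
    Finset.card_powersetCard, Finset.card_univ, Fintype.card_fin] at hcard
  exact hcard

end Count

lemma main_bound {t : ℕ} (ht : 1 ≤ t) {m : ℕ} (hm : 0 < m) (hmin : ccen m < t)
    (𝒞 : Finset (Finset (Fin t × Fin 2)))
    (hcov : IsCliqueCover (cocktailParty t) 𝒞) :
    t * m ≤ ∑ C ∈ 𝒞, C.card := by
  classical
  have ht2 : 2 ≤ t := by have := ccen_pos m; omega
  have hadj : ∀ u v : Fin t × Fin 2, (cocktailParty t).Adj u v ↔ u.1 ≠ v.1 :=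
    fun u v => Iff.rfl
  let V := Fin t × Fin 2
  let β := {C : Finset V // C ∈ 𝒞}
  let N := Fintype.card β
  let AA : Fin t → Finset β := fun i => Finset.univ.filter (fun C => ((i, 0) : V) ∈ C.1)
  let BB : Fin t → Finset β := fun i => Finset.univ.filter (fun C => ((i, 1) : V) ∈ C.1)
  let d : Fin t → ℕ := fun i => (AA i).card + (BB i).card
  -- sum identity
  have hsum : ∑ C ∈ 𝒞, C.card = ∑ i : Fin t, d i := by
    have e1 : ∑ C ∈ 𝒞, C.card = ∑ C : β, (C.1).card := by
      rw [Finset.univ_eq_attach, Finset.sum_attach]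
    have e2 : ∀ C : Finset V, C.card = ∑ v : V, if v ∈ C then 1 else 0 := by
      intro C
      rw [← Finset.card_filter, Finset.filter_univ_mem]
    calc ∑ C ∈ 𝒞, C.card = ∑ C : β, (C.1).card := e1
      _ = ∑ C : β, ∑ v : V, (if v ∈ C.1 then 1 else 0) := by
          exact Finset.sum_congr rfl (fun C _ => e2 C.1)
      _ = ∑ v : V, ∑ C : β, (if v ∈ C.1 then 1 else 0) := Finset.sum_comm
      _ = ∑ v : V, (Finset.univ.filter (fun C : β => v ∈ C.1)).card := by
          exact Finset.sum_congr rfl (fun v _ => (Finset.card_filter _ _).symm)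
      _ = ∑ i : Fin t, d i := by
          rw [Fintype.sum_prod_type]
          exact Finset.sum_congr rfl (fun i _ => by rw [Fin.sum_univ_two])
  -- disjointness of AA i and BB i
  have hABdisj : ∀ i, Disjoint (AA i) (BB i) := by
    intro i
    rw [Finset.disjoint_left]
    intro C hC0 hC1
    have h0 : ((i, 0) : V) ∈ C.1 := (Finset.mem_filter.1 hC0).2
    have h1 : ((i, 1) : V) ∈ C.1 := (Finset.mem_filter.1 hC1).2
    have hclique := hcov.1 C.1 C.2
    have hne : ((i, 0) : V) ≠ ((i, 1) : V) := by simp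
    have := hclique (by exact_mod_cast h0) (by exact_mod_cast h1) hne
    exact (hadj _ _).1 this rfl
  -- cross intersections
  have hcross : ∀ i j : Fin t, i ≠ j → ∃ C : β, C ∈ AA i ∧ C ∈ BB j := by
    intro i j hij
    obtain ⟨C, hC, h0, h1⟩ := hcov.2 ((i, 0) : V) ((j, 1) : V) (by simpa [hadj] using hij)
    exact ⟨⟨C, hC⟩, Finset.mem_filter.2 ⟨Finset.mem_univ _, h0⟩,
      Finset.mem_filter.2 ⟨Finset.mem_univ _, h1⟩⟩
  -- nonemptiness / d i ≥ 1
  have hd1 : ∀ i, 1 ≤ d i := by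
    intro i
    obtain ⟨j, hj⟩ := Fintype.exists_ne_of_one_lt_card (by simp; omega) i
    obtain ⟨C, hCA, _⟩ := hcross i j (Ne.symm hj)
    have : (AA i).Nonempty := ⟨C, hCA⟩
    have := Finset.card_pos.2 this
    simp only [d]
    omega
  -- events
  let E : Fin t → Finset (β ≃ Fin N) := fun i =>
    Finset.univ.filter (fun σ => ∀ x ∈ AA i, ∀ y ∈ BB i, σ x < σ y)
  have hEdisj : ∀ i ∈ (Finset.univ : Finset (Fin t)), ∀ j ∈ Finset.univ, i ≠ j →
      Disjoint (E i) (E j) := by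
    intro i _ j _ hij
    rw [Finset.disjoint_left]
    intro σ hσi hσj
    obtain ⟨C, hCAi, hCBj⟩ := hcross i j hij
    obtain ⟨C', hCAj, hCBi⟩ := hcross j i (Ne.symm hij)
    have h1 := (Finset.mem_filter.1 hσi).2 C hCAi C' hCBi
    have h2 := (Finset.mem_filter.1 hσj).2 C' hCAj C hCBj
    exact absurd (h1.trans h2) (lt_irrefl _)
  have hEsum : ∑ i : Fin t, (E i).card ≤ N.factorial := by
    rw [← Finset.card_biUnion hEdisj]
    calc (Finset.univ.biUnion E).card ≤ (Finset.univ : Finset (β ≃ Fin N)).card :=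
          Finset.card_le_card (Finset.subset_univ _)
      _ = N.factorial := by
          rw [Finset.card_univ, Fintype.card_equiv (Fintype.equivFin β)]
  have hcount : ∀ i : Fin t, N.factorial ≤ ccen (d i) * (E i).card := by
    intro i
    calc N.factorial ≤ (d i).choose (AA i).card * (E i).card :=
          count_before (AA i) (BB i) (hABdisj i)
      _ ≤ ccen (d i) * (E i).card :=
          Nat.mul_le_mul_right _ (choose_le_ccen _ _)
  -- move to ℚ
  have hNfacpos : (0:ℚ) < (N.factorial : ℚ) := by exact_mod_cast N.factorial_pos
  have hq1 : ∀ i : Fin t, gg (d i) ≤ ((E i).card : ℚ) / (N.factorial : ℚ) := by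
    intro i
    unfold gg
    rw [div_le_div_iff₀ (by exact_mod_cast ccen_pos (d i)) hNfacpos]
    have h5 : (N.factorial : ℚ) ≤ (ccen (d i) : ℚ) * ((E i).card : ℚ) := by
      exact_mod_cast hcount i
    linarith
  have hq2 : ∑ i : Fin t, gg (d i) ≤ 1 := by
    calc ∑ i : Fin t, gg (d i) ≤ ∑ i : Fin t, ((E i).card : ℚ) / (N.factorial : ℚ) :=
          Finset.sum_le_sum (fun i _ => hq1 i)
      _ = (∑ i : Fin t, ((E i).card : ℚ)) / (N.factorial : ℚ) := by rw [Finset.sum_div]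
      _ ≤ 1 := by
          rw [div_le_one hNfacpos]
          exact_mod_cast hEsum
  -- tangent bound
  have htan : ∀ i : Fin t, gg m + (gg (m+1) - gg m) * ((d i : ℚ) - (m:ℚ)) ≤ gg (d i) :=
    fun i => gg_tangent hm (hd1 i)
  have hsumtan : (t:ℚ) * gg m + (gg (m+1) - gg m) * ((∑ i : Fin t, (d i : ℚ)) - (t:ℚ)*(m:ℚ))
      ≤ ∑ i : Fin t, gg (d i) := by
    have hs := Finset.sum_le_sum (fun i (_ : i ∈ Finset.univ) => htan i)
    calc (t:ℚ) * gg m + (gg (m+1) - gg m) * ((∑ i : Fin t, (d i : ℚ)) - (t:ℚ)*(m:ℚ))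
        = ∑ i : Fin t, (gg m + (gg (m+1) - gg m) * ((d i : ℚ) - (m:ℚ))) := by
          rw [Finset.sum_add_distrib, Finset.sum_const, ← Finset.mul_sum,
            Finset.sum_sub_distrib, Finset.sum_const]
          simp only [Finset.card_univ, Fintype.card_fin, nsmul_eq_mul]
          try ring
      _ ≤ ∑ i : Fin t, gg (d i) := hs
  -- final contradiction
  by_contra hcon
  push_neg at hcon
  have hD : (∑ i : Fin t, (d i : ℚ)) ≤ (t:ℚ)*(m:ℚ) - 1 := by
    have h4 : 1 ≤ t * m := Nat.mul_pos (by omega) hm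
    have h1 : ∑ i : Fin t, d i ≤ t * m - 1 := by omega
    have h3 : ((∑ i : Fin t, d i : ℕ) : ℚ) ≤ ((t * m - 1 : ℕ) : ℚ) := by exact_mod_cast h1
    push_cast [h4] at h3
    push_cast
    linarith
  have hslope : gg (m+1) ≤ gg m := by
    unfold gg
    exact one_div_le_one_div_of_le (by exact_mod_cast ccen_pos m) (by exact_mod_cast ccen_mono m)
  have hggm_pos : 0 < gg m := by
    unfold gg
    have hc : (0:ℚ) < (ccen m : ℚ) := by exact_mod_cast ccen_pos m
    positivity
  have htgm : 1 + gg m ≤ (t:ℚ) * gg m := by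
    have hcm : ((ccen m : ℚ)) + 1 ≤ (t:ℚ) := by exact_mod_cast hmin
    have hc : (0:ℚ) < (ccen m : ℚ) := by exact_mod_cast ccen_pos m
    have h6 : (ccen m : ℚ) * (1/(ccen m : ℚ)) = 1 := by field_simp
    have h5 : (0:ℚ) ≤ ((t:ℚ) - ((ccen m:ℚ)+1)) * (1/(ccen m:ℚ)) :=
      mul_nonneg (by linarith) (by positivity)
    unfold gg
    nlinarith
  have h7 : (gg m - gg (m+1)) * 1 ≤ (gg m - gg (m+1)) * ((t:ℚ)*(m:ℚ) - ∑ i : Fin t, (d i : ℚ)) :=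
    mul_le_mul_of_nonneg_left (by linarith) (by linarith)
  nlinarith [hq2, hsumtan, htgm, h7, hslope, hggm_pos]

/-- For every positive integer `t`, `t · δ(t) ≤ scc(K_t(2))`. -/
theorem stmt_14 (t : ℕ) (ht : 1 ≤ t) : t * delta t ≤ scc (cocktailParty t) := by
  classical
  rcases Nat.eq_zero_or_pos (delta t) with hm0 | hm
  · simp [hm0]
  set m := delta t with hmdef
  -- facts about delta
  have hSne : {m' | ∃ k : ℕ, 1 ≤ k ∧ m' = k - 1 ∧ t ≤ Nat.choose k ((k + 1) / 2)}.Nonempty := by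
    refine ⟨2*t - 1, 2*t, by omega, rfl, ?_⟩
    calc t ≤ (2*t).choose 1 := by rw [Nat.choose_one_right]; omega
      _ ≤ ccen (2*t) := choose_le_ccen _ _
  have hmem : m ∈ {m' | ∃ k : ℕ, 1 ≤ k ∧ m' = k - 1 ∧ t ≤ Nat.choose k ((k + 1) / 2)} := by
    rw [hmdef]; unfold delta; exact Nat.sInf_mem hSne
  obtain ⟨k₀, hk1, hmk, htk⟩ := hmem
  have hmin : ccen m < t := by
    by_contra hcon
    push_neg at hcon
    have hlt : m - 1 < delta t := by omega
    exact Nat.notMem_of_lt_sInf hlt ⟨m, hm, rfl, hcon⟩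
  -- nonemptiness of the scc set via the trivial cover
  have hcovne : {k | ∃ 𝒞, IsCliqueCover (cocktailParty t) 𝒞 ∧ ∑ C ∈ 𝒞, C.card = k}.Nonempty := by
    refine ⟨_, Finset.image (fun p : (Fin t × Fin 2) × (Fin t × Fin 2) =>
        ({p.1, p.2} : Finset (Fin t × Fin 2)))
        (Finset.univ.filter fun p => p.1.1 ≠ p.2.1), ⟨?_, ?_⟩, rfl⟩
    · intro C hC
      rcases Finset.mem_image.1 hC with ⟨p, hp, rfl⟩
      have hne : p.1.1 ≠ p.2.1 := (Finset.mem_filter.1 hp).2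
      have hcoe : ((({p.1, p.2} : Finset (Fin t × Fin 2)) : Set (Fin t × Fin 2)))
          = {p.1, p.2} := by simp
      rw [hcoe, SimpleGraph.isClique_pair]
      intro _
      exact hne
    · intro u v huv
      refine ⟨{u, v}, Finset.mem_image.2 ⟨(u, v), Finset.mem_filter.2
        ⟨Finset.mem_univ _, huv⟩, rfl⟩, ?_, ?_⟩
      · exact Finset.mem_insert_self _ _
      · exact Finset.mem_insert_of_mem (Finset.mem_singleton_self _)
  apply le_csInf hcovne
  rintro x ⟨CC, hcov, rfl⟩
  exact main_bound ht hm hmin CC hcov
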